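/- Let X₁ ∈ B(H₁) and X₂ ∈ B(H₂) be self-adjoint bounded operators, and consider their images (again denoted X₁, X₂) in the monotone product: X₁ acts as X₁⊗P₂ and X₂ as 1⊗X₂ on H₁⊗H₂, with P = 1⊗P₂ and H_{X₂}(z) = 1/⟨Ω₂, (z−X₂)⁻¹Ω₂⟩ the reciprocal Cauchy transform of X₂ in the vector state of Ω₂. Then for all complex z with |z| > ‖X₁‖ + ‖X₂‖: P (z − (X₁⊗P₂ + 1⊗X₂))⁻¹ P = (H_{X₂}(z) − X₁)⁻¹ ⊗ P₂. -/

import Mathlib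

open scoped InnerProductSpace

set_option maxHeartbeats 1600000 in
/-- For monotonically independent self-adjoint operators `X₁ ⊗ P₂` and `1 ⊗ X₂` on
`H = H₁ ⊗ H₂`, with `P = 1 ⊗ P₂`, and `|z| > ‖X₁‖ + ‖X₂‖`:
`P (z − (X₁⊗P₂ + 1⊗X₂))⁻¹ P = (H_{X₂}(z) − X₁)⁻¹ ⊗ P₂`, where
`H_{X₂}(z) = 1/⟪Ω₂, (z − X₂)⁻¹ Ω₂⟫` is the reciprocal Cauchy transform of `X₂`. -/
theorem compressed_resolvent_eq_reciprocal_cauchy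
    {H₁ H₂ H : Type*}
    [NormedAddCommGroup H₁] [InnerProductSpace ℂ H₁] [CompleteSpace H₁]
    [NormedAddCommGroup H₂] [InnerProductSpace ℂ H₂] [CompleteSpace H₂]
    [NormedAddCommGroup H] [InnerProductSpace ℂ H] [CompleteSpace H]
    (Ω₁ : H₁) (hΩ₁ : ‖Ω₁‖ = 1) (Ω₂ : H₂) (hΩ₂ : ‖Ω₂‖ = 1)
    (Ω : H) (hΩ : ‖Ω‖ = 1)
    -- `tens A B` represents the tensor product operator `A ⊗ B` on `H = H₁ ⊗ H₂`
    (tens : (H₁ →L[ℂ] H₁) →ₗ[ℂ] (H₂ →L[ℂ] H₂) →ₗ[ℂ] (H →L[ℂ] H))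
    (htensOne : tens 1 1 = 1)
    (htensMul : ∀ (A C : H₁ →L[ℂ] H₁) (B D : H₂ →L[ℂ] H₂),
      tens A B * tens C D = tens (A * C) (B * D))
    (htensState : ∀ (A : H₁ →L[ℂ] H₁) (B : H₂ →L[ℂ] H₂),
      ⟪Ω, (tens A B) Ω⟫_ℂ = ⟪Ω₁, A Ω₁⟫_ℂ * ⟪Ω₂, B Ω₂⟫_ℂ)
    (htensStar : ∀ (A : H₁ →L[ℂ] H₁) (B : H₂ →L[ℂ] H₂),
      star (tens A B) = tens (star A) (star B))
    (P₂ : H₂ →L[ℂ] H₂) (hP₂ : ∀ y : H₂, P₂ y = ⟪Ω₂, y⟫_ℂ • Ω₂)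
    (X₁ : H₁ →L[ℂ] H₁) (X₂ : H₂ →L[ℂ] H₂)
    (hX₁ : IsSelfAdjoint X₁) (hX₂ : IsSelfAdjoint X₂)
    (z : ℂ) (hz : ‖X₁‖ + ‖X₂‖ < ‖z‖) :
    tens 1 P₂ *
        Ring.inverse (z • (1 : H →L[ℂ] H) - (tens X₁ P₂ + tens 1 X₂)) *
        tens 1 P₂
      = tens
          (Ring.inverse
            ((⟪Ω₂, (Ring.inverse (z • (1 : H₂ →L[ℂ] H₂) - X₂)) Ω₂⟫_ℂ)⁻¹ • (1 : H₁ →L[ℂ] H₁)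
              - X₁))
          P₂ := by
  have hX₁0 : (0:ℝ) ≤ ‖X₁‖ := norm_nonneg _
  have hX₂0 : (0:ℝ) ≤ ‖X₂‖ := norm_nonneg _
  have hzX₂ : ‖X₂‖ < ‖z‖ := by linarith
  have hzpos : (0:ℝ) < ‖z‖ := lt_of_le_of_lt hX₂0 hzX₂
  have hz0 : z ≠ 0 := norm_pos_iff.mp hzpos
  -- S₂ = z - X₂ is invertible
  set S₂ : H₂ →L[ℂ] H₂ := z • 1 - X₂ with hS₂def
  have hSunit : IsUnit S₂ := by
    have hlt : ‖z⁻¹ • X₂‖ < 1 := by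
      rw [norm_smul, norm_inv]
      calc ‖z‖⁻¹ * ‖X₂‖ < ‖z‖⁻¹ * ‖z‖ := mul_lt_mul_of_pos_left hzX₂ (by positivity)
        _ = 1 := inv_mul_cancel₀ (ne_of_gt hzpos)
    have hfac : S₂ = (z • (1:H₂ →L[ℂ] H₂)) * (1 - z⁻¹ • X₂) := by
      rw [mul_sub, mul_one, smul_mul_assoc, one_mul, smul_smul, mul_inv_cancel₀ hz0, one_smul,
        hS₂def]
    rw [hfac]
    have hzu : IsUnit (z • (1:H₂ →L[ℂ] H₂)) := by
      refine ⟨⟨z • 1, z⁻¹ • 1, ?_, ?_⟩, rfl⟩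
      · rw [smul_mul_assoc, one_mul, smul_smul, mul_inv_cancel₀ hz0, one_smul]
      · rw [smul_mul_assoc, one_mul, smul_smul, inv_mul_cancel₀ hz0, one_smul]
    exact hzu.mul (isUnit_one_sub_of_norm_lt_one hlt)
  set R₂ : H₂ →L[ℂ] H₂ := Ring.inverse S₂ with hR₂def
  have hSR : S₂ * R₂ = 1 := Ring.mul_inverse_cancel S₂ hSunit
  have hRS : R₂ * S₂ = 1 := Ring.inverse_mul_cancel S₂ hSunit
  set w : H₂ := R₂ Ω₂ with hwdef
  have hw : S₂ w = Ω₂ := by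
    have := congrArg (fun A : H₂ →L[ℂ] H₂ => A Ω₂) hSR
    simpa [ContinuousLinearMap.mul_apply] using this
  have hSw : z • w - X₂ w = Ω₂ := by
    rw [← hw, hS₂def]; simp
  set G : ℂ := ⟪Ω₂, w⟫_ℂ with hGdef
  -- bound on ‖w‖
  have hwbound : (‖z‖ - ‖X₂‖) * ‖w‖ ≤ 1 := by
    have h1 : ‖z • w‖ - ‖X₂ w‖ ≤ ‖z • w - X₂ w‖ := norm_sub_norm_le _ _
    have h2 : ‖X₂ w‖ ≤ ‖X₂‖ * ‖w‖ := X₂.le_opNorm w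
    have h3 : ‖z • w‖ = ‖z‖ * ‖w‖ := norm_smul z w
    rw [hSw, hΩ₂] at h1
    nlinarith
  have hwne : w ≠ 0 := by
    intro h0
    rw [h0] at hw
    simp only [map_zero] at hw
    rw [← hw, norm_zero] at hΩ₂
    norm_num at hΩ₂
  have hwpos : (0:ℝ) < ‖w‖ := norm_pos_iff.mpr hwne
  -- G ≠ 0
  have hGform : G = (starRingEnd ℂ) z * ⟪w, w⟫_ℂ - ⟪X₂ w, w⟫_ℂ := by
    rw [hGdef, ← hSw, inner_sub_left, inner_smul_left]
  have hzGre : 0 < (z * G).re := by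
    have hww : ⟪w, w⟫_ℂ = (‖w‖ : ℂ) ^ 2 := inner_self_eq_norm_sq_to_K w
    have h1 : (z * ((starRingEnd ℂ) z * ⟪w, w⟫_ℂ)).re = ‖z‖ ^ 2 * ‖w‖ ^ 2 := by
      rw [← mul_assoc, Complex.mul_conj, hww]
      simp [← Complex.ofReal_pow, ← Complex.ofReal_mul, Complex.normSq_eq_norm_sq]
    have h2 : |(z * ⟪X₂ w, w⟫_ℂ).re| ≤ ‖z‖ * (‖X₂‖ * ‖w‖ * ‖w‖) := by
      calc |(z * ⟪X₂ w, w⟫_ℂ).re| ≤ ‖z * ⟪X₂ w, w⟫_ℂ‖ := Complex.abs_re_le_norm _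
        _ = ‖z‖ * ‖⟪X₂ w, w⟫_ℂ‖ := by rw [norm_mul]
        _ ≤ ‖z‖ * (‖X₂‖ * ‖w‖ * ‖w‖) := by
            refine mul_le_mul_of_nonneg_left ?_ (norm_nonneg z)
            calc ‖⟪X₂ w, w⟫_ℂ‖ ≤ ‖X₂ w‖ * ‖w‖ := norm_inner_le_norm _ _
              _ ≤ ‖X₂‖ * ‖w‖ * ‖w‖ :=
                mul_le_mul_of_nonneg_right (X₂.le_opNorm w) (norm_nonneg w)
    have hexp : (z * G).re = ‖z‖ ^ 2 * ‖w‖ ^ 2 - (z * ⟪X₂ w, w⟫_ℂ).re := by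
      rw [hGform, mul_sub, Complex.sub_re, h1]
    rw [hexp]
    have h3 : |(z * ⟪X₂ w, w⟫_ℂ).re| ≤ ‖z‖ * ‖X₂‖ * ‖w‖ ^ 2 := by nlinarith
    have h4 := (abs_le.mp h3).2
    nlinarith [mul_pos (mul_pos hzpos (sub_pos.mpr hzX₂)) (mul_pos hwpos hwpos)]
  have hGne : G ≠ 0 := by
    intro h0
    rw [h0, mul_zero] at hzGre
    simp at hzGre
  -- the small-norm condition for 1 - G • X₁
  have hGnorm : ‖G‖ ≤ ‖w‖ := by
    calc ‖G‖ ≤ ‖Ω₂‖ * ‖w‖ := norm_inner_le_norm _ _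
      _ = ‖w‖ := by rw [hΩ₂, one_mul]
  have hGXlt : ‖G • X₁‖ < 1 := by
    rw [norm_smul]
    nlinarith
  set u : (H₁ →L[ℂ] H₁)ˣ := Units.oneSub (G • X₁) hGXlt with hudef
  have huval : (u : H₁ →L[ℂ] H₁) = 1 - G • X₁ := rfl
  set C : H₁ →L[ℂ] H₁ := (↑u⁻¹ : H₁ →L[ℂ] H₁) * X₁ with hCdef
  have hu1 : (1 - G • X₁) * (↑u⁻¹ : H₁ →L[ℂ] H₁) = 1 := by rw [← huval]; exact u.mul_inv
  have hu2 : (↑u⁻¹ : H₁ →L[ℂ] H₁) * (1 - G • X₁) = 1 := by rw [← huval]; exact u.inv_mul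
  have hcomm : X₁ * (↑u⁻¹ : H₁ →L[ℂ] H₁) = (↑u⁻¹ : H₁ →L[ℂ] H₁) * X₁ := by
    have h : Commute X₁ (u : H₁ →L[ℂ] H₁) := by
      rw [huval]
      show X₁ * (1 - G • X₁) = (1 - G • X₁) * X₁
      rw [mul_sub, sub_mul, mul_one, one_mul, mul_smul_comm, smul_mul_assoc]
    exact (h.units_inv_right).eq
  have hCX : C - G • (X₁ * C) = X₁ := by
    have h : (1 - G • X₁) * C = X₁ := by
      rw [hCdef, ← mul_assoc, hu1, one_mul]
    calc C - G • (X₁ * C) = (1 - G • X₁) * C := by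
          rw [sub_mul, one_mul, smul_mul_assoc]
      _ = X₁ := h
  have hCXcomm : C * X₁ = X₁ * C := by
    simp only [hCdef, ← mul_assoc, hcomm]
  have hCX' : C - G • (C * X₁) = X₁ := by rw [hCXcomm]; exact hCX
  -- operator identities in B(H₂)
  have hinnerΩ₂ : ⟪Ω₂, Ω₂⟫_ℂ = 1 := by
    rw [inner_self_eq_norm_sq_to_K, hΩ₂]; norm_num
  have hP₂sq : P₂ * P₂ = P₂ := by
    refine ContinuousLinearMap.ext fun y => ?_
    rw [ContinuousLinearMap.mul_apply, hP₂ y, map_smul, hP₂ Ω₂, hinnerΩ₂, one_smul]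
  have hPRP : P₂ * R₂ * P₂ = G • P₂ := by
    refine ContinuousLinearMap.ext fun y => ?_
    rw [ContinuousLinearMap.mul_apply, ContinuousLinearMap.mul_apply, hP₂ y, map_smul,
      map_smul, ← hwdef, hP₂ w, ← hGdef, ContinuousLinearMap.smul_apply, hP₂ y,
      smul_smul, smul_smul, mul_comm]
  -- the explicit inverse of T
  set T : H →L[ℂ] H := z • (1 : H →L[ℂ] H) - (tens X₁ P₂ + tens 1 X₂) with hTdef
  set K : H →L[ℂ] H := tens 1 R₂ + tens C (R₂ * (P₂ * R₂)) with hKdef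
  have htens1S : tens 1 S₂ = z • (1 : H →L[ℂ] H) - tens 1 X₂ := by
    rw [hS₂def, map_sub, map_smul, htensOne]
  have hT : T = tens 1 S₂ - tens X₁ P₂ := by
    rw [htens1S, hTdef]; abel
  have htsmul : ∀ (a : ℂ) (A : H₁ →L[ℂ] H₁) (B : H₂ →L[ℂ] H₂),
      tens A (a • B) = tens (a • A) B := by
    intro a A B
    rw [map_smul, map_smul, LinearMap.smul_apply]
  have hTK : T * K = 1 := by
    rw [hT, hKdef, sub_mul, mul_add, mul_add, htensMul, htensMul, htensMul, htensMul]
    have e2 : S₂ * (R₂ * (P₂ * R₂)) = P₂ * R₂ := by rw [← mul_assoc, hSR, one_mul]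
    have e3 : P₂ * (R₂ * (P₂ * R₂)) = G • (P₂ * R₂) := by
      calc P₂ * (R₂ * (P₂ * R₂)) = (P₂ * R₂ * P₂) * R₂ := by simp only [mul_assoc]
        _ = (G • P₂) * R₂ := by rw [hPRP]
        _ = G • (P₂ * R₂) := smul_mul_assoc G P₂ R₂
    rw [hSR, e2, e3, one_mul C, mul_one X₁, one_mul (1 : H₁ →L[ℂ] H₁), htensOne, htsmul]
    have hsum : tens X₁ (P₂ * R₂) + tens (G • (X₁ * C)) (P₂ * R₂) = tens C (P₂ * R₂) := by
      have h : X₁ + G • (X₁ * C) = C := (sub_eq_iff_eq_add.mp hCX).symm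
      rw [← LinearMap.add_apply, ← map_add, h]
    rw [hsum]
    abel
  have hKT : K * T = 1 := by
    rw [hT, hKdef, mul_sub, add_mul, add_mul, htensMul, htensMul, htensMul, htensMul]
    have f2 : (R₂ * (P₂ * R₂)) * S₂ = R₂ * P₂ := by
      calc (R₂ * (P₂ * R₂)) * S₂ = R₂ * (P₂ * (R₂ * S₂)) := by simp only [mul_assoc]
        _ = R₂ * P₂ := by rw [hRS, mul_one]
    have f3 : (R₂ * (P₂ * R₂)) * P₂ = G • (R₂ * P₂) := by
      calc (R₂ * (P₂ * R₂)) * P₂ = R₂ * (P₂ * R₂ * P₂) := by simp only [mul_assoc]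
        _ = R₂ * (G • P₂) := by rw [hPRP]
        _ = G • (R₂ * P₂) := mul_smul_comm G R₂ P₂
    rw [hRS, f2, f3, mul_one C, one_mul X₁, one_mul (1 : H₁ →L[ℂ] H₁), htensOne, htsmul]
    have hsum : tens X₁ (R₂ * P₂) + tens (G • (C * X₁)) (R₂ * P₂) = tens C (R₂ * P₂) := by
      have h : X₁ + G • (C * X₁) = C := (sub_eq_iff_eq_add.mp hCX').symm
      rw [← LinearMap.add_apply, ← map_add, h]
    rw [hsum]
    abel
  have hRTinv : Ring.inverse T = K := Ring.inverse_unit ⟨T, K, hTK, hKT⟩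
  -- compute the compression
  have hLHS : tens 1 P₂ * K * tens 1 P₂ = tens (G • 1 + (G * G) • C) P₂ := by
    rw [hKdef, mul_add, htensMul, htensMul, add_mul, htensMul, htensMul]
    have g2 : P₂ * (R₂ * (P₂ * R₂)) * P₂ = (G * G) • P₂ := by
      calc P₂ * (R₂ * (P₂ * R₂)) * P₂ = (P₂ * R₂ * P₂) * (R₂ * P₂) := by simp only [mul_assoc]
        _ = (G • P₂) * (R₂ * P₂) := by rw [hPRP]
        _ = G • (P₂ * R₂ * P₂) := by rw [smul_mul_assoc, mul_assoc]
        _ = G • (G • P₂) := by rw [hPRP]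
        _ = (G * G) • P₂ := (smul_smul G G P₂)
    rw [hPRP, g2, one_mul, one_mul, one_mul, mul_one, htsmul, htsmul, ← LinearMap.add_apply,
      ← map_add]
  have hRight : Ring.inverse (G⁻¹ • (1 : H₁ →L[ℂ] H₁) - X₁) = G • (↑u⁻¹ : H₁ →L[ℂ] H₁) := by
    have hval : G⁻¹ • (1 : H₁ →L[ℂ] H₁) - X₁ = G⁻¹ • (↑u : H₁ →L[ℂ] H₁) := by
      rw [huval, smul_sub, smul_smul, inv_mul_cancel₀ hGne, one_smul]
    have p1 : (G⁻¹ • (↑u : H₁ →L[ℂ] H₁)) * (G • (↑u⁻¹ : H₁ →L[ℂ] H₁)) = 1 := by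
      rw [smul_mul_smul_comm, inv_mul_cancel₀ hGne, u.mul_inv, one_smul]
    have p2 : (G • (↑u⁻¹ : H₁ →L[ℂ] H₁)) * (G⁻¹ • (↑u : H₁ →L[ℂ] H₁)) = 1 := by
      rw [smul_mul_smul_comm, mul_inv_cancel₀ hGne, u.inv_mul, one_smul]
    rw [hval]
    exact Ring.inverse_unit ⟨G⁻¹ • (↑u : H₁ →L[ℂ] H₁), G • (↑u⁻¹ : H₁ →L[ℂ] H₁), p1, p2⟩
  have hDsum : G • (1 : H₁ →L[ℂ] H₁) + (G * G) • C = G • (↑u⁻¹ : H₁ →L[ℂ] H₁) := by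
    have h : (↑u⁻¹ : H₁ →L[ℂ] H₁) = 1 + G • C := by
      have h2 : (↑u⁻¹ : H₁ →L[ℂ] H₁) - G • C = 1 := by
        calc (↑u⁻¹ : H₁ →L[ℂ] H₁) - G • C = ↑u⁻¹ * (1 - G • X₁) := by
              rw [mul_sub, mul_one, mul_smul_comm, hCdef]
          _ = 1 := hu2
      rw [← h2]; abel
    rw [h, smul_add, smul_smul]
  rw [hRTinv, hLHS, hDsum, ← hRight]
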